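/- arXiv:0905.4482 — 2 statements merged into one kernel-verified Lean document; each statement's English description precedes it below -/
import Mathlib

section
/- (Almost orthogonality of columns.) Let Φ be an m×d real matrix satisfying the restricted isometry condition with parameters (2s, ε), where 0 < ε ≤ 0.03. Consider two disjoint index sets I, J ⊆ {1,…,d} with |I ∪ J| ≤ 2s. Let P_I and P_J denote the orthogonal projections in ℝ^m onto range(Φ_I) and range(Φ_J) respectively, where Φ_I is the column submatrix of Φ with columns indexed by I. Then the operator norm satisfies ‖P_I P_J‖_{2→2} ≤ 2.2 ε. -/
/-- The Euclidean (ℓ2) norm of a finitely-indexed real vector. -/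
noncomputable def l2 {ι : Type*} [Fintype ι] (v : ι → ℝ) : ℝ :=
  Real.sqrt (∑ i, (v i) ^ 2)

/-- A vector is `s`-sparse if it has at most `s` nonzero coordinates. -/
def Sparse {d : ℕ} (s : ℕ) (v : Fin d → ℝ) : Prop :=
  {i | v i ≠ 0}.ncard ≤ s

/-- `Φ` satisfies the restricted isometry condition with parameters `(r, ε)`. -/
def RIC {m d : ℕ} (Φ : Matrix (Fin m) (Fin d) ℝ) (r : ℕ) (ε : ℝ) : Prop :=
  ∀ v : Fin d → ℝ, Sparse r v →
    (1 - ε) * l2 v ≤ l2 (Φ.mulVec v) ∧ l2 (Φ.mulVec v) ≤ (1 + ε) * l2 v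

/-- The span of the columns of `Φ` indexed by `I`, i.e. `range (Φ_I)`,
as a subspace of `ℝ^m` with the Euclidean structure. -/
noncomputable def colSpan {m d : ℕ} (Φ : Matrix (Fin m) (Fin d) ℝ) (I : Finset (Fin d)) :
    Submodule ℝ (EuclideanSpace ℝ (Fin m)) :=
  Submodule.span ℝ ((fun i => (WithLp.toLp 2 (fun j => Φ j i) : EuclideanSpace ℝ (Fin m))) '' ↑I)

open RealInnerProductSpace

lemma l2_nonneg {k : ℕ} (v : Fin k → ℝ) : 0 ≤ l2 v := Real.sqrt_nonneg _

lemma l2_eq_norm {k : ℕ} (v : EuclideanSpace ℝ (Fin k)) : l2 v = ‖v‖ := by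
  rw [EuclideanSpace.norm_eq, l2]; simp [sq_abs]

lemma l2_sq {k : ℕ} (v : Fin k → ℝ) : l2 v ^ 2 = ∑ i, v i ^ 2 := by
  rw [l2, Real.sq_sqrt]; positivity

lemma l2_eq_zero {k : ℕ} {v : Fin k → ℝ} (h : l2 v = 0) : ∀ i, v i = 0 := by
  have h2 : ∑ i, v i ^ 2 = 0 := by
    have := l2_sq v; rw [h] at this; linarith [this]
  intro i
  have := Finset.sum_eq_zero_iff_of_nonneg (fun i _ => sq_nonneg (v i)) |>.mp h2 i (by simp)
  exact pow_eq_zero_iff (n := 2) (by norm_num) |>.mp this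

lemma l2_smul {k : ℕ} (c : ℝ) (v : Fin k → ℝ) : l2 (c • v) = |c| * l2 v := by
  rw [l2, l2, ← Real.sqrt_sq_eq_abs, ← Real.sqrt_mul (sq_nonneg c), Finset.mul_sum]
  congr 1
  exact Finset.sum_congr rfl fun i _ => by
    simp only [Pi.smul_apply, smul_eq_mul, mul_pow]

lemma sparse_of_support {d s : ℕ} {u : Fin d → ℝ} {K : Finset (Fin d)}
    (h : ∀ i, i ∉ K → u i = 0) (hK : K.card ≤ s) : Sparse s u := by
  refine le_trans (le_trans (Set.ncard_le_ncard ?_ K.finite_toSet) ?_) hK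
  · intro i hi
    by_contra hiK
    exact hi (h i hiK)
  · rw [Set.ncard_coe_finset]

lemma colSpan_rep {m d : ℕ} (Φ : Matrix (Fin m) (Fin d) ℝ) (I : Finset (Fin d))
    {x : EuclideanSpace ℝ (Fin m)} (hx : x ∈ colSpan Φ I) :
    ∃ u : Fin d → ℝ, (∀ i, i ∉ I → u i = 0) ∧ ∀ j, x j = Φ.mulVec u j := by
  induction hx using Submodule.span_induction with
  | mem y hy =>
    obtain ⟨i, hi, rfl⟩ := hy
    refine ⟨Pi.single i 1, fun k hk => Pi.single_eq_of_ne (by rintro rfl; exact hk hi) _,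
      fun j => ?_⟩
    simp [Matrix.mulVec_single]
  | zero => exact ⟨0, fun _ _ => rfl, fun j => by simp [Matrix.mulVec_zero]⟩
  | add a b _ _ ha hb =>
    obtain ⟨u, hu0, hu⟩ := ha
    obtain ⟨v, hv0, hv⟩ := hb
    refine ⟨u + v, fun i hi => by simp [hu0 i hi, hv0 i hi], fun j => ?_⟩
    have : (a + b) j = a j + b j := rfl
    rw [this, Matrix.mulVec_add, hu j, hv j]; rfl
  | smul c a _ ha =>
    obtain ⟨u, hu0, hu⟩ := ha
    refine ⟨c • u, fun i hi => by simp [hu0 i hi], fun j => ?_⟩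
    have : (c • a) j = c * a j := rfl
    rw [this, Matrix.mulVec_smul, hu j]; rfl

/-- One-sided quadratic almost-orthogonality bound. -/
lemma key_upper {m d s : ℕ} {ε : ℝ} (hε0 : 0 < ε) (hε : ε ≤ 0.03)
    {Φ : Matrix (Fin m) (Fin d) ℝ} (hΦ : RIC Φ (2 * s) ε)
    {I J : Finset (Fin d)} (hdisj : Disjoint I J) (hcard : (I ∪ J).card ≤ 2 * s)
    {u v : Fin d → ℝ} (hu : ∀ i, i ∉ I → u i = 0) (hv : ∀ i, i ∉ J → v i = 0) :
    ∑ i, Φ.mulVec u i * Φ.mulVec v i ≤ ε * (l2 u ^ 2 + l2 v ^ 2) := by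
  have hsupp_add : ∀ i, i ∉ I ∪ J → (u + v) i = 0 := fun i hi => by
    simp [hu i (fun h => hi (Finset.mem_union_left _ h)),
      hv i (fun h => hi (Finset.mem_union_right _ h))]
  have hsupp_sub : ∀ i, i ∉ I ∪ J → (u - v) i = 0 := fun i hi => by
    simp [hu i (fun h => hi (Finset.mem_union_left _ h)),
      hv i (fun h => hi (Finset.mem_union_right _ h))]
  have hcross : ∀ i, u i * v i = 0 := by
    intro i
    by_cases hiI : i ∈ I
    · have : i ∉ J := fun hiJ => (Finset.disjoint_left.mp hdisj hiI) hiJ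
      rw [hv i this, mul_zero]
    · rw [hu i hiI, zero_mul]
  -- disjoint-support Pythagoras
  have hadd : l2 (u + v) ^ 2 = l2 u ^ 2 + l2 v ^ 2 := by
    rw [l2_sq, l2_sq, l2_sq, ← Finset.sum_add_distrib]
    refine Finset.sum_congr rfl fun i _ => ?_
    have := hcross i
    simp only [Pi.add_apply]; nlinarith [hcross i]
  have hsub : l2 (u - v) ^ 2 = l2 u ^ 2 + l2 v ^ 2 := by
    rw [l2_sq, l2_sq, l2_sq, ← Finset.sum_add_distrib]
    refine Finset.sum_congr rfl fun i _ => ?_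
    simp only [Pi.sub_apply]; nlinarith [hcross i]
  -- RIC bounds
  have h1 := (hΦ (u + v) (sparse_of_support hsupp_add hcard)).2
  have h2 := (hΦ (u - v) (sparse_of_support hsupp_sub hcard)).1
  have hA : l2 (Φ.mulVec (u + v)) ^ 2 ≤ (1 + ε) ^ 2 * (l2 u ^ 2 + l2 v ^ 2) := by
    have := pow_le_pow_left₀ (l2_nonneg _) h1 2
    rw [mul_pow, hadd] at this
    exact this
  have hB : (1 - ε) ^ 2 * (l2 u ^ 2 + l2 v ^ 2) ≤ l2 (Φ.mulVec (u - v)) ^ 2 := by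
    have hnn : 0 ≤ (1 - ε) * l2 (u - v) := by
      apply mul_nonneg (by linarith) (l2_nonneg _)
    have := pow_le_pow_left₀ hnn h2 2
    rw [mul_pow, hsub] at this
    exact this
  -- polarization
  have hpol : 4 * ∑ i, Φ.mulVec u i * Φ.mulVec v i
      = l2 (Φ.mulVec (u + v)) ^ 2 - l2 (Φ.mulVec (u - v)) ^ 2 := by
    rw [l2_sq, l2_sq, Matrix.mulVec_add, Matrix.mulVec_sub, ← Finset.sum_sub_distrib,
      Finset.mul_sum]
    refine Finset.sum_congr rfl fun i _ => ?_
    simp only [Pi.add_apply, Pi.sub_apply]; ring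
  have hS : 0 ≤ l2 u ^ 2 + l2 v ^ 2 := by positivity
  nlinarith [hpol, hA, hB, hS]

/-- Bilinear almost-orthogonality bound. -/
lemma key_bilinear {m d s : ℕ} {ε : ℝ} (hε0 : 0 < ε) (hε : ε ≤ 0.03)
    {Φ : Matrix (Fin m) (Fin d) ℝ} (hΦ : RIC Φ (2 * s) ε)
    {I J : Finset (Fin d)} (hdisj : Disjoint I J) (hcard : (I ∪ J).card ≤ 2 * s)
    {u v : Fin d → ℝ} (hu : ∀ i, i ∉ I → u i = 0) (hv : ∀ i, i ∉ J → v i = 0) :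
    |∑ i, Φ.mulVec u i * Φ.mulVec v i| ≤ 2 * ε * l2 u * l2 v := by
  -- scaled vectors
  set p := l2 u with hp
  set q := l2 v with hq
  have hp0 : 0 ≤ p := l2_nonneg u
  have hq0 : 0 ≤ q := l2_nonneg v
  rcases eq_or_lt_of_le hp0 with hpz | hppos
  · have : ∀ i, u i = 0 := l2_eq_zero hpz.symm
    have hu0 : u = 0 := funext this
    simp only [hu0, Matrix.mulVec_zero, Pi.zero_apply, zero_mul, Finset.sum_const_zero,
      abs_zero]
    exact mul_nonneg (mul_nonneg (by positivity) hp0) hq0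
  rcases eq_or_lt_of_le hq0 with hqz | hqpos
  · have : ∀ i, v i = 0 := l2_eq_zero hqz.symm
    have hv0 : v = 0 := funext this
    simp only [hv0, Matrix.mulVec_zero, Pi.zero_apply, mul_zero, Finset.sum_const_zero,
      abs_zero]
    exact mul_nonneg (mul_nonneg (by positivity) hp0) hq0
  -- apply quadratic bound to q•u and p•v
  have hu' : ∀ i, i ∉ I → (q • u) i = 0 := fun i hi => by simp [hu i hi]
  have hv' : ∀ i, i ∉ J → (p • v) i = 0 := fun i hi => by simp [hv i hi]
  have h1 := key_upper hε0 hε hΦ hdisj hcard hu' hv'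
  have h2 := key_upper hε0 hε hΦ hdisj hcard hu' (v := -(p • v))
    (fun i hi => by simp [hv i hi])
  have hlq : l2 (q • u) = q * p := by rw [l2_smul, abs_of_nonneg hq0]
  have hlp : l2 (p • v) = p * q := by rw [l2_smul, abs_of_nonneg hp0]
  have hlp' : l2 (-(p • v)) = p * q := by
    have : -(p • v) = (-p) • v := by funext i; simp
    rw [this, l2_smul, abs_neg, abs_of_nonneg hp0]
  have hsum1 : ∑ i, Φ.mulVec (q • u) i * Φ.mulVec (p • v) i
      = (q * p) * ∑ i, Φ.mulVec u i * Φ.mulVec v i := by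
    rw [Matrix.mulVec_smul, Matrix.mulVec_smul, Finset.mul_sum]
    refine Finset.sum_congr rfl fun i _ => ?_
    simp [smul_eq_mul]; ring
  have hsum2 : ∑ i, Φ.mulVec (q • u) i * Φ.mulVec (-(p • v)) i
      = -((q * p) * ∑ i, Φ.mulVec u i * Φ.mulVec v i) := by
    have hneg : Φ.mulVec (-(p • v)) = -(Φ.mulVec (p • v)) := by
      rw [Matrix.mulVec_neg]
    rw [hneg, ← hsum1, ← Finset.sum_neg_distrib]
    exact Finset.sum_congr rfl fun i _ => by simp only [Pi.neg_apply]; ring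
  rw [hsum1, hlq, hlp] at h1
  rw [hsum2, hlq, hlp'] at h2
  -- h1 : q*p*S ≤ ε*((q*p)^2 + (p*q)^2), h2 : -(q*p*S) ≤ same
  have hqp : 0 < q * p := mul_pos hqpos hppos
  rw [abs_le]
  constructor
  · nlinarith [h2, hqp, sq_nonneg (q * p)]
  · nlinarith [h1, hqp, sq_nonneg (q * p)]

set_option maxHeartbeats 1000000

/-- **Almost orthogonality of columns.** Under RIC with parameters
`(2s, ε)`, for disjoint `I, J` with `|I ∪ J| ≤ 2s`, the orthogonal projections onto
`range(Φ_I)` and `range(Φ_J)` satisfy `‖P_I P_J‖_{2→2} ≤ 2.2 ε`, i.e.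
`‖P_I (P_J z)‖ ≤ 2.2 ε ‖z‖` for every `z ∈ ℝ^m`. -/
theorem stmt3 (m d s : ℕ) (ε : ℝ) (hε0 : 0 < ε) (hε : ε ≤ 0.03)
    (Φ : Matrix (Fin m) (Fin d) ℝ) (hΦ : RIC Φ (2 * s) ε)
    (I J : Finset (Fin d)) (hdisj : Disjoint I J) (hcard : (I ∪ J).card ≤ 2 * s) :
    ∀ z : EuclideanSpace ℝ (Fin m),
      ‖(Submodule.orthogonalProjection (colSpan Φ I)
          ((Submodule.orthogonalProjection (colSpan Φ J) z : colSpan Φ J) : EuclideanSpace ℝ (Fin m)) :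
          colSpan Φ I)‖ ≤ 2.2 * ε * ‖z‖ := by
  intro z
  set y : EuclideanSpace ℝ (Fin m) := ↑(Submodule.orthogonalProjection (colSpan Φ J) z) with hy
  set x : EuclideanSpace ℝ (Fin m) := ↑(Submodule.orthogonalProjection (colSpan Φ I) y) with hx
  show ‖x‖ ≤ 2.2 * ε * ‖z‖
  -- ‖x‖² = ⟪x, y⟫
  have hinner : ‖x‖ ^ 2 = ⟪x, y⟫ := by
    have h := Submodule.inner_orthogonalProjection_eq_of_mem_right (𝕜 := ℝ) (K := colSpan Φ I)
      (Submodule.orthogonalProjection (colSpan Φ I) y) y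
    rw [Submodule.coe_inner] at h
    rw [← real_inner_self_eq_norm_sq, hx]
    rw [h, real_inner_comm]
  have hxmem : x ∈ colSpan Φ I := (Submodule.orthogonalProjection (colSpan Φ I) y).2
  have hymem : y ∈ colSpan Φ J := (Submodule.orthogonalProjection (colSpan Φ J) z).2
  obtain ⟨u, hu0, hu⟩ := colSpan_rep Φ I hxmem
  obtain ⟨v, hv0, hv⟩ := colSpan_rep Φ J hymem
  have hsum : ⟪x, y⟫ = ∑ i, Φ.mulVec u i * Φ.mulVec v i := by
    rw [PiLp.inner_apply]
    exact Finset.sum_congr rfl fun i _ => by rw [← hu i, ← hv i]; simp [RCLike.inner_apply, mul_comm]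
  have hkey : ‖x‖ ^ 2 ≤ 2 * ε * l2 u * l2 v := by
    rw [hinner, hsum]
    exact le_trans (le_abs_self _) (key_bilinear hε0 hε hΦ hdisj hcard hu0 hv0)
  -- relate l2 u, l2 v to ‖x‖, ‖y‖
  have hux : l2 (Φ.mulVec u) = ‖x‖ := by
    rw [← l2_eq_norm x]; unfold l2; congr 1
    exact Finset.sum_congr rfl fun i _ => by rw [hu i]
  have hvy : l2 (Φ.mulVec v) = ‖y‖ := by
    rw [← l2_eq_norm y]; unfold l2; congr 1
    exact Finset.sum_congr rfl fun i _ => by rw [hv i]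
  have hu2 : (1 - ε) * l2 u ≤ ‖x‖ := by
    rw [← hux]
    exact (hΦ u (sparse_of_support hu0 (le_trans (Finset.card_le_card
      Finset.subset_union_left) hcard))).1
  have hv2 : (1 - ε) * l2 v ≤ ‖y‖ := by
    rw [← hvy]
    exact (hΦ v (sparse_of_support hv0 (le_trans (Finset.card_le_card
      Finset.subset_union_right) hcard))).1
  have hyz : ‖y‖ ≤ ‖z‖ := by
    rw [hy]
    calc ‖(Submodule.orthogonalProjection (colSpan Φ J) z : EuclideanSpace ℝ (Fin m))‖
        = ‖Submodule.orthogonalProjection (colSpan Φ J) z‖ := rfl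
      _ ≤ ‖Submodule.orthogonalProjection (colSpan Φ J)‖ * ‖z‖ :=
          (Submodule.orthogonalProjection (colSpan Φ J)).le_opNorm z
      _ ≤ 1 * ‖z‖ := by
          apply mul_le_mul_of_nonneg_right (Submodule.orthogonalProjection_norm_le _) (norm_nonneg z)
      _ = ‖z‖ := one_mul _
  have hlu : 0 ≤ l2 u := l2_nonneg u
  have hlv : 0 ≤ l2 v := l2_nonneg v
  have hxn : 0 ≤ ‖x‖ := norm_nonneg x
  have hyn : 0 ≤ ‖y‖ := norm_nonneg y
  have hzn : 0 ≤ ‖z‖ := norm_nonneg z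
  -- combine: ‖x‖² ≤ 2ε/(1-ε)² ‖x‖ ‖y‖  with  2/(1-ε)² ≤ 2.2
  have hmul : (1 - ε) ^ 2 * (l2 u * l2 v) ≤ ‖x‖ * ‖y‖ := by
    nlinarith [mul_le_mul hu2 hv2 (mul_nonneg (by linarith : (0:ℝ) ≤ 1 - ε) hlv) hxn]
  have hpq : 0 ≤ l2 u * l2 v := mul_nonneg hlu hlv
  have hden : (2 : ℝ) ≤ 2.2 * (1 - ε) ^ 2 := by nlinarith
  have t1 : 2 * (ε * (l2 u * l2 v)) ≤ 2.2 * (1 - ε) ^ 2 * (ε * (l2 u * l2 v)) := by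
    nlinarith [hden, mul_nonneg hε0.le hpq]
  have t2 : 2.2 * ε * ((1 - ε) ^ 2 * (l2 u * l2 v)) ≤ 2.2 * ε * (‖x‖ * ‖y‖) := by
    apply mul_le_mul_of_nonneg_left hmul (by positivity)
  have t3 : 2.2 * ε * (‖x‖ * ‖y‖) ≤ 2.2 * ε * (‖x‖ * ‖z‖) := by
    apply mul_le_mul_of_nonneg_left (mul_le_mul_of_nonneg_left hyz hxn) (by positivity)
  have h2 : ‖x‖ ^ 2 ≤ 2.2 * ε * (‖x‖ * ‖z‖) := by linarith [hkey, t1, t2, t3]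
  clear_value x y
  rcases eq_or_lt_of_le hxn with hx0 | hxpos
  · rw [← hx0]; positivity
  · have h3 : ‖x‖ * ‖x‖ ≤ ‖x‖ * (2.2 * ε * ‖z‖) := by nlinarith [h2]
    exact le_of_mul_le_mul_left h3 hxpos
end

section
/- (Energy Bound.) Let Φ be an m×d real matrix, r a positive integer, and δ ≥ 0, and suppose Φ verifies the upper restricted isometry inequality ‖Φx‖₂ ≤ √(1+δ) ‖x‖₂ for every r-sparse vector x ∈ ℝ^d. Then, for every vector x ∈ ℝ^d, ‖Φx‖₂ ≤ √(1+δ) (‖x‖₂ + ‖x‖₁/√r). -/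
/-- The ℓ1 norm of a finitely-indexed real vector. -/
noncomputable def l1 {ι : Type*} [Fintype ι] (v : ι → ℝ) : ℝ :=
  ∑ i, |v i|

lemma l2_nonneg' {ι : Type*} [Fintype ι] (v : ι → ℝ) : 0 ≤ l2 v := Real.sqrt_nonneg _

lemma l1_nonneg' {ι : Type*} [Fintype ι] (v : ι → ℝ) : 0 ≤ l1 v :=
  Finset.sum_nonneg fun _ _ => abs_nonneg _

lemma sparse_of_card' {d s : ℕ} (v : Fin d → ℝ)
    (h : (Finset.univ.filter (fun i => v i ≠ 0)).card ≤ s) : Sparse s v := by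
  show {i | v i ≠ 0}.ncard ≤ s
  have he : {i | v i ≠ 0}.ncard = (Finset.univ.filter (fun i => v i ≠ 0)).card := by
    rw [Set.ncard_eq_toFinset_card']
    congr 1
    ext i
    simp
  rw [he]
  exact h

lemma l2_eq_norm' {ι : Type*} [Fintype ι] (v : ι → ℝ) :
    l2 v = ‖(WithLp.equiv 2 (ι → ℝ)).symm v‖ := by
  rw [EuclideanSpace.norm_eq]
  simp [l2, Real.norm_eq_abs, sq_abs]

lemma l2_add_le' {ι : Type*} [Fintype ι] (v w : ι → ℝ) :
    l2 (fun i => v i + w i) ≤ l2 v + l2 w := by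
  have h : (fun i => v i + w i) = v + w := rfl
  rw [h, l2_eq_norm', l2_eq_norm', l2_eq_norm']
  exact norm_add_le ((WithLp.equiv 2 (ι → ℝ)).symm v) ((WithLp.equiv 2 (ι → ℝ)).symm w)

lemma l2_mono' {ι : Type*} [Fintype ι] (v w : ι → ℝ) (h : ∀ i, (v i) ^ 2 ≤ (w i) ^ 2) :
    l2 v ≤ l2 w :=
  Real.sqrt_le_sqrt (Finset.sum_le_sum fun i _ => h i)

lemma exists_top' (d r : ℕ) (hrd : r ≤ d) (y : Fin d → ℝ) :
    ∃ T : Finset (Fin d), T.card = r ∧ ∀ i ∈ T, ∀ j ∉ T, |y j| ≤ |y i| := by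
  set f : Fin d → ℝ := fun i => |y i| with hf
  set σ : Equiv.Perm (Fin d) := Tuple.sort f with hσ
  have hmono : Monotone (f ∘ σ) := Tuple.monotone_sort f
  have hemb : Function.Injective (fun a : Fin r => σ ⟨d - r + (a : ℕ), by omega⟩) := by
    intro a b hab
    have h1 : (⟨d - r + (a : ℕ), by omega⟩ : Fin d) = ⟨d - r + (b : ℕ), by omega⟩ :=
      σ.injective hab
    have h2 := Fin.mk.injEq (d - r + (a : ℕ)) _ (d - r + (b : ℕ)) _ ▸ h1
    exact Fin.ext (by omega)
  refine ⟨Finset.univ.image (fun a : Fin r => σ ⟨d - r + (a : ℕ), by omega⟩), ?_, ?_⟩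
  · rw [Finset.card_image_of_injective _ hemb, Finset.card_univ, Fintype.card_fin]
  · intro i hi j hj
    simp only [Finset.mem_image, Finset.mem_univ, true_and] at hi
    obtain ⟨a, ha⟩ := hi
    have hb : ((σ.symm j : Fin d) : ℕ) < d - r := by
      by_contra hb
      push_neg at hb
      apply hj
      simp only [Finset.mem_image, Finset.mem_univ, true_and]
      refine ⟨⟨(σ.symm j : ℕ) - (d - r), by omega⟩, ?_⟩
      have he : (⟨d - r + ((σ.symm j : ℕ) - (d - r)), by omega⟩ : Fin d) = σ.symm j :=
        Fin.ext (by simp; omega)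
      rw [he]; simp
    have hle : f (σ (σ.symm j)) ≤ f (σ ⟨d - r + (a : ℕ), by omega⟩) := by
      apply hmono
      show (σ.symm j : Fin d) ≤ _
      rw [Fin.le_def]
      simp; omega
    rw [Equiv.apply_symm_apply, ha] at hle
    exact hle

lemma l2_le_of_bounded' {ι : Type*} [Fintype ι] [DecidableEq ι] (v : ι → ℝ) (T : Finset ι)
    (c : ℝ) (hc : 0 ≤ c) (hb : ∀ i, |v i| ≤ c) (hs : ∀ i, v i ≠ 0 → i ∈ T) :
    l2 v ≤ Real.sqrt T.card * c := by
  have h1 : ∑ i, (v i) ^ 2 ≤ (T.card : ℝ) * c ^ 2 := by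
    have h2 : ∑ i, (v i) ^ 2 = ∑ i ∈ T, (v i) ^ 2 := by
      rw [← Finset.sum_subset (Finset.subset_univ T)]
      intro i _ hi
      have : v i = 0 := by by_contra h; exact hi (hs i h)
      simp [this]
    rw [h2]
    calc ∑ i ∈ T, (v i) ^ 2 ≤ ∑ _i ∈ T, c ^ 2 := by
          apply Finset.sum_le_sum
          intro i _
          rw [← sq_abs]
          exact pow_le_pow_left₀ (abs_nonneg _) (hb i) 2
      _ = (T.card : ℝ) * c ^ 2 := by rw [Finset.sum_const, nsmul_eq_mul]
  calc l2 v ≤ Real.sqrt ((T.card : ℝ) * c ^ 2) := Real.sqrt_le_sqrt h1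
    _ = Real.sqrt T.card * c := by
        rw [Real.sqrt_mul (Nat.cast_nonneg _), Real.sqrt_sq hc]

/-- base case of the induction: small support. -/
lemma base_case' (m d r : ℕ) (δ : ℝ)
    (Φ : Matrix (Fin m) (Fin d) ℝ)
    (hupper : ∀ v : Fin d → ℝ, Sparse r v →
      l2 (Φ.mulVec v) ≤ Real.sqrt (1 + δ) * l2 v)
    (x : Fin d → ℝ) (hx : (Finset.univ.filter (fun i => x i ≠ 0)).card ≤ r)
    (T : Finset (Fin d)) (hT : T.card = r) (htop : ∀ i ∈ T, ∀ j ∉ T, |x j| ≤ |x i|) :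
    l2 (Φ.mulVec x) ≤ Real.sqrt (1 + δ) * (l2 (fun i => if i ∈ T then x i else 0)
      + l1 x / Real.sqrt r) := by
  have hres : (fun i => if i ∈ T then x i else 0) = x := by
    funext i
    by_cases hi : i ∈ T
    · simp [hi]
    · simp only [hi, if_false]
      by_contra hxi
      have hne : x i ≠ 0 := fun h => hxi h.symm
      -- then every entry of T is nonzero, so T ∪ {i} ⊆ support, contradiction
      have hTsub : T ⊆ Finset.univ.filter (fun j => x j ≠ 0) := by
        intro j hj
        simp only [Finset.mem_filter, Finset.mem_univ, true_and]
        have := htop j hj i hi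
        intro h0
        rw [h0] at this
        simp at this
        exact hne this
      have hins : insert i T ⊆ Finset.univ.filter (fun j => x j ≠ 0) := by
        intro j hj
        rcases Finset.mem_insert.mp hj with h | h
        · subst h; simp [hne]
        · exact hTsub h
      have := Finset.card_le_card hins
      rw [Finset.card_insert_of_notMem hi, hT] at this
      omega
  rw [hres]
  have h1 : l2 (Φ.mulVec x) ≤ Real.sqrt (1 + δ) * l2 x :=
    hupper x (sparse_of_card' x hx)
  have h2 : Real.sqrt (1 + δ) * l2 x ≤ Real.sqrt (1 + δ) * (l2 x + l1 x / Real.sqrt r) := by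
    apply mul_le_mul_of_nonneg_left _ (Real.sqrt_nonneg _)
    have : 0 ≤ l1 x / Real.sqrt r := div_nonneg (l1_nonneg' x) (Real.sqrt_nonneg _)
    linarith
  exact h1.trans h2

lemma key' (m d r : ℕ) (hr : 0 < r) (hrd : r ≤ d) (δ : ℝ)
    (Φ : Matrix (Fin m) (Fin d) ℝ)
    (hupper : ∀ v : Fin d → ℝ, Sparse r v →
      l2 (Φ.mulVec v) ≤ Real.sqrt (1 + δ) * l2 v) :
    ∀ n (x : Fin d → ℝ), (Finset.univ.filter (fun i => x i ≠ 0)).card ≤ n →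
      ∀ T : Finset (Fin d), T.card = r → (∀ i ∈ T, ∀ j ∉ T, |x j| ≤ |x i|) →
      l2 (Φ.mulVec x) ≤ Real.sqrt (1 + δ) * (l2 (fun i => if i ∈ T then x i else 0)
        + l1 x / Real.sqrt r) := by
  have hsqrtr : (0:ℝ) < Real.sqrt r := Real.sqrt_pos.mpr (by exact_mod_cast hr)
  have hsq : (0:ℝ) ≤ Real.sqrt (1 + δ) := Real.sqrt_nonneg _
  intro n
  induction n with
  | zero =>
    intro x hx T hT htop
    exact base_case' m d r δ Φ hupper x (hx.trans (Nat.zero_le r)) T hT htop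
  | succ n ih =>
    intro x hx T hT htop
    by_cases hsmall : (Finset.univ.filter (fun i => x i ≠ 0)).card ≤ r
    · exact base_case' m d r δ Φ hupper x hsmall T hT htop
    push_neg at hsmall
    set u : Fin d → ℝ := fun i => if i ∈ T then x i else 0 with hu
    set y : Fin d → ℝ := fun i => if i ∈ T then 0 else x i with hy
    have hxuy : x = fun i => u i + y i := by
      funext i
      by_cases hi : i ∈ T <;> simp [hu, hy, hi]
    -- support of y
    have hsuppy : Finset.univ.filter (fun i => y i ≠ 0)
        = (Finset.univ.filter (fun i => x i ≠ 0)) \ T := by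
      ext i
      by_cases hi : i ∈ T <;> simp [hy, hi]
    -- T is inside the support of x
    have hTsub : T ⊆ Finset.univ.filter (fun i => x i ≠ 0) := by
      have hne : ∃ j ∈ Finset.univ.filter (fun i => x i ≠ 0), j ∉ T := by
        by_contra hcon
        push_neg at hcon
        have := Finset.card_le_card hcon
        omega
      obtain ⟨j, hjs, hjT⟩ := hne
      simp only [Finset.mem_filter, Finset.mem_univ, true_and] at hjs
      intro i hi
      simp only [Finset.mem_filter, Finset.mem_univ, true_and]
      have h1 := htop i hi j hjT
      intro h0
      rw [h0] at h1
      simp at h1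
      exact hjs h1
    have hcardy : (Finset.univ.filter (fun i => y i ≠ 0)).card ≤ n := by
      rw [hsuppy, Finset.card_sdiff_of_subset hTsub, hT]
      omega
    -- top-r set for y
    obtain ⟨T', hT', htop'⟩ := exists_top' d r hrd y
    have hIH := ih y hcardy T' hT' htop'
    -- u is sparse
    have husp : Sparse r u := by
      apply sparse_of_card'
      have : Finset.univ.filter (fun i => u i ≠ 0) ⊆ T := by
        intro i hi
        simp only [Finset.mem_filter, Finset.mem_univ, true_and, hu] at hi
        by_contra hiT
        simp [hiT] at hi
      calc (Finset.univ.filter (fun i => u i ≠ 0)).card ≤ T.card := Finset.card_le_card this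
        _ = r := hT
    have hU := hupper u husp
    -- the crucial bound : l2 (res T' y) ≤ l1 u / √r
    have hcrux : l2 (fun i => if i ∈ T' then y i else 0) ≤ l1 u / Real.sqrt r := by
      have hl1u : l1 u = ∑ i ∈ T, |x i| := by
        rw [l1, ← Finset.sum_subset (Finset.subset_univ T)]
        · apply Finset.sum_congr rfl
          intro i hi
          simp [hu, hi]
        · intro i _ hi
          simp [hu, hi]
      have hc0 : 0 ≤ l1 u / r := div_nonneg (l1_nonneg' u) (Nat.cast_nonneg r)
      have hbd : ∀ j, |if j ∈ T' then y j else 0| ≤ l1 u / r := by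
        intro j
        by_cases hj : j ∈ T'
        · simp only [hj, if_true]
          by_cases hyj : y j = 0
          · simpa [hyj] using hc0
          · have hjT : j ∉ T := by
              by_contra hjT
              simp [hy, hjT] at hyj
            have hyx : y j = x j := by simp [hy, hjT]
            rw [hyx]
            rw [le_div_iff₀ (by exact_mod_cast hr)]
            calc |x j| * r = ∑ _i ∈ T, |x j| := by
                  rw [Finset.sum_const, hT, nsmul_eq_mul, mul_comm]
              _ ≤ ∑ i ∈ T, |x i| := Finset.sum_le_sum (fun i hi => htop i hi j hjT)
              _ = l1 u := hl1u.symm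
        · simpa [hj] using hc0
      have hsupp : ∀ j, (if j ∈ T' then y j else 0) ≠ 0 → j ∈ T' := by
        intro j hj
        by_contra h
        simp [h] at hj
      have := l2_le_of_bounded' (fun i => if i ∈ T' then y i else 0) T' (l1 u / r)
        hc0 hbd hsupp
      rw [hT'] at this
      refine this.trans (le_of_eq ?_)
      rw [eq_div_iff (ne_of_gt hsqrtr)]
      have hrr : Real.sqrt r * Real.sqrt r = (r : ℝ) :=
        Real.mul_self_sqrt (Nat.cast_nonneg r)
      field_simp
      ring_nf
      rw [Real.sq_sqrt (Nat.cast_nonneg r)]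
      ring
    -- l1 splits
    have hl1 : l1 x = l1 u + l1 y := by
      rw [l1, l1, l1, ← Finset.sum_add_distrib]
      apply Finset.sum_congr rfl
      intro i _
      by_cases hi : i ∈ T <;> simp [hu, hy, hi]
    -- triangle inequality
    have htri : l2 (Φ.mulVec x) ≤ l2 (Φ.mulVec u) + l2 (Φ.mulVec y) := by
      have : Φ.mulVec x = fun i => Φ.mulVec u i + Φ.mulVec y i := by
        rw [hxuy]
        rw [show (fun i => u i + y i) = u + y from rfl, Matrix.mulVec_add]
        rfl
      rw [this]
      exact l2_add_le' _ _
    calc l2 (Φ.mulVec x) ≤ l2 (Φ.mulVec u) + l2 (Φ.mulVec y) := htri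
      _ ≤ Real.sqrt (1 + δ) * l2 u
          + Real.sqrt (1 + δ) * (l2 (fun i => if i ∈ T' then y i else 0)
            + l1 y / Real.sqrt r) := add_le_add hU hIH
      _ ≤ Real.sqrt (1 + δ) * l2 u
          + Real.sqrt (1 + δ) * (l1 u / Real.sqrt r + l1 y / Real.sqrt r) := by
            apply add_le_add_right
            apply mul_le_mul_of_nonneg_left _ hsq
            exact add_le_add_left hcrux _
      _ = Real.sqrt (1 + δ) * (l2 u + l1 x / Real.sqrt r) := by
            rw [hl1]
            field_simp
  
/-- **Energy Bound.** If `‖Φx‖₂ ≤ √(1+δ) ‖x‖₂` for every `r`-sparse `x`,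
then for every vector `x`, `‖Φx‖₂ ≤ √(1+δ) (‖x‖₂ + ‖x‖₁/√r)`. -/
theorem stmt9 (m d r : ℕ) (hr : 0 < r) (δ : ℝ) (hδ : 0 ≤ δ)
    (Φ : Matrix (Fin m) (Fin d) ℝ)
    (hupper : ∀ v : Fin d → ℝ, Sparse r v →
      l2 (Φ.mulVec v) ≤ Real.sqrt (1 + δ) * l2 v)
    (x : Fin d → ℝ) :
    l2 (Φ.mulVec x) ≤ Real.sqrt (1 + δ) * (l2 x + l1 x / Real.sqrt r) := by
  by_cases hrd : r ≤ d
  · obtain ⟨T, hT, htop⟩ := exists_top' d r hrd x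
    have h := key' m d r hr hrd δ Φ hupper
      (Finset.univ.filter (fun i => x i ≠ 0)).card x le_rfl T hT htop
    refine h.trans ?_
    apply mul_le_mul_of_nonneg_left _ (Real.sqrt_nonneg _)
    apply add_le_add_left
    apply l2_mono'
    intro i
    by_cases hi : i ∈ T <;> simp [hi] <;> positivity
  · -- every vector is r-sparse
    push_neg at hrd
    have hsp : Sparse r x := by
      apply sparse_of_card'
      calc (Finset.univ.filter (fun i => x i ≠ 0)).card ≤ Finset.univ.card :=
            Finset.card_le_card (Finset.filter_subset _ _)
        _ = d := by simp
        _ ≤ r := le_of_lt hrd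
    have h1 := hupper x hsp
    refine h1.trans ?_
    apply mul_le_mul_of_nonneg_left _ (Real.sqrt_nonneg _)
    have : 0 ≤ l1 x / Real.sqrt r := div_nonneg (l1_nonneg' x) (Real.sqrt_nonneg _)
    linarith
end
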